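/- Suppose G has a nested t-module (A, B, C, K, I) with t ≥ 1, and suppose G admits a cograph edit of size at most k. Then every minimum cograph edit S of G (with |S| ≤ k) contains every pair {x,y} with x ∈ A, y ∈ I that is an edge of G, and every pair {x,y} with x ∈ A, y ∈ K that is a non-edge of G. -/

import Mathlib

/-- `X` is a module of `G`: every vertex outside `X` is adjacent to all of `X` or none of `X`. -/
def IsModule {V : Type*} (G : SimpleGraph V) (X : Set V) : Prop :=
  ∀ x ∈ X, ∀ y ∈ X, ∀ v, v ∉ X → (G.Adj v x ↔ G.Adj v y)

/-- `a,b,c,d` form an induced path on four vertices in `G`. -/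
def IsInducedP4 {V : Type*} (G : SimpleGraph V) (a b c d : V) : Prop :=
  a ≠ b ∧ a ≠ c ∧ a ≠ d ∧ b ≠ c ∧ b ≠ d ∧ c ≠ d ∧
  G.Adj a b ∧ G.Adj b c ∧ G.Adj c d ∧ ¬ G.Adj a c ∧ ¬ G.Adj a d ∧ ¬ G.Adj b d

/-- A cograph is a graph with no induced `P₄`. -/
def IsCograph {V : Type*} (G : SimpleGraph V) : Prop :=
  ∀ a b c d, ¬ IsInducedP4 G a b c d

/-- The edit of `G` by a set `S` of (unordered) pairs: the adjacency is flipped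
exactly on the pairs of `S`. -/
def editGraph {V : Type*} (G : SimpleGraph V) (S : Set (Sym2 V)) : SimpleGraph V where
  Adj x y := x ≠ y ∧ ((G.Adj x y ∧ s(x,y) ∉ S) ∨ (¬ G.Adj x y ∧ s(x,y) ∈ S))
  symm := by
    constructor
    intro x y h
    refine ⟨h.1.symm, ?_⟩
    rw [Sym2.eq_swap]
    rcases h.2 with ⟨ha, hs⟩ | ⟨ha, hs⟩
    · exact Or.inl ⟨ha.symm, hs⟩
    · exact Or.inr ⟨fun hadj => ha hadj.symm, hs⟩
  loopless := ⟨fun x h => h.1 rfl⟩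

/-- `δ(X)`: the set of pairs with exactly one endpoint in `X`. -/
def cutPairs {V : Type*} (X : Set V) : Set (Sym2 V) :=
  {e | ∃ x y, e = s(x,y) ∧ x ∈ X ∧ y ∉ X}

/-- `X` is a `t`-module of `G`: editing at most `t` pairs of its cut makes it a module. -/
def IsTModule {V : Type*} (G : SimpleGraph V) (t : ℕ) (X : Set V) : Prop :=
  ∃ T ⊆ cutPairs X, T.ncard ≤ t ∧ IsModule (editGraph G T) X

/-- `M` is (the vertex set of) a connected component of `G`. -/
def IsCC {V : Type*} (G : SimpleGraph V) (M : Set V) : Prop :=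
  ∃ x, M = {y | G.Reachable x y}

/-- A comodule: a module which is a connected component of `G` or of its complement. -/
def IsComodule {V : Type*} (G : SimpleGraph V) (M : Set V) : Prop :=
  IsModule G M ∧ (IsCC G M ∨ IsCC Gᶜ M)

/-- A strong module: a module comparable with every module it meets. -/
def IsStrongModule {V : Type*} (G : SimpleGraph V) (M : Set V) : Prop :=
  IsModule G M ∧ ∀ M', IsModule G M' → (M ∩ M').Nonempty → M ⊆ M' ∨ M' ⊆ M

/-- `(A, B, C, K, I)` is a nested `t`-module of `G` (with parameter `k`). -/
def IsNestedTModule {V : Type*} (G : SimpleGraph V) (k t : ℕ)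
    (A B C K I : Set V) : Prop :=
  A.Nonempty ∧ B.Nonempty ∧ C.Nonempty ∧ K.Nonempty ∧ I.Nonempty ∧
  A ∪ B ∪ C ∪ K ∪ I = Set.univ ∧
  List.Pairwise Disjoint [A, B, C, K, I] ∧
  IsTModule G t A ∧ IsTModule G t (A ∪ B) ∧ IsTModule G t (A ∪ B ∪ C) ∧
  k + t < A.ncard ∧
  (∃ Bp ⊆ B, 3 * t + 1 ≤ Bp.ncard ∧ ∀ b ∈ Bp,
    (∀ a ∈ A, G.Adj b a) ∧ (∀ w ∈ K, G.Adj b w) ∧ (∀ i ∈ I, ¬ G.Adj b i)) ∧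
  (∃ Bq ⊆ B, 3 * t + 1 ≤ Bq.ncard ∧ ∀ b ∈ Bq,
    (∀ a ∈ A, ¬ G.Adj b a) ∧ (∀ w ∈ K, G.Adj b w) ∧ (∀ i ∈ I, ¬ G.Adj b i)) ∧
  (∃ Cp ⊆ C, 3 * t + 1 ≤ Cp.ncard ∧ ∀ c ∈ Cp,
    (∀ a ∈ A ∪ B, G.Adj c a) ∧ (∀ w ∈ K, G.Adj c w) ∧ (∀ i ∈ I, ¬ G.Adj c i)) ∧
  (∃ Cq ⊆ C, 3 * t + 1 ≤ Cq.ncard ∧ ∀ c ∈ Cq,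
    (∀ a ∈ A ∪ B, ¬ G.Adj c a) ∧ (∀ w ∈ K, G.Adj c w) ∧ (∀ i ∈ I, ¬ G.Adj c i))

private lemma mem_cutPairs' {V : Type*} {X : Set V} {u v : V} :
    s(u,v) ∈ cutPairs X ↔ ((u ∈ X ∧ v ∉ X) ∨ (v ∈ X ∧ u ∉ X)) := by
  constructor
  · rintro ⟨x, y, hxy, hx, hy⟩
    rw [Sym2.eq_iff] at hxy
    rcases hxy with ⟨rfl, rfl⟩ | ⟨rfl, rfl⟩
    · exact Or.inl ⟨hx, hy⟩
    · exact Or.inr ⟨hx, hy⟩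
  · rintro (⟨hu, hv⟩ | ⟨hv, hu⟩)
    · exact ⟨u, v, rfl, hu, hv⟩
    · exact ⟨v, u, Sym2.eq_swap.symm, hv, hu⟩

private lemma editGraph_adj {V : Type*} {G : SimpleGraph V} {S : Set (Sym2 V)} {u v : V} :
    (editGraph G S).Adj u v ↔ u ≠ v ∧ ((G.Adj u v ∧ s(u,v) ∉ S) ∨ (¬ G.Adj u v ∧ s(u,v) ∈ S)) :=
  Iff.rfl

private lemma editGraph_adj_not_mem {V : Type*} {G : SimpleGraph V} {S : Set (Sym2 V)} {u v : V}
    (h : s(u,v) ∉ S) : (editGraph G S).Adj u v ↔ G.Adj u v := by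
  rw [editGraph_adj]
  constructor
  · rintro ⟨hne, ⟨hg, _⟩ | ⟨_, hs⟩⟩
    · exact hg
    · exact absurd hs h
  · intro hg
    exact ⟨hg.ne, Or.inl ⟨hg, h⟩⟩

private lemma editGraph_adj_congr {V : Type*} {G : SimpleGraph V} {S S' : Set (Sym2 V)} {u v : V}
    (h : s(u,v) ∈ S ↔ s(u,v) ∈ S') :
    (editGraph G S).Adj u v ↔ (editGraph G S').Adj u v := by
  rw [editGraph_adj, editGraph_adj]
  tauto

private lemma ncard_filter_pair_le {V : Type*} [Fintype V] (S : Set (Sym2 V)) (W : Set V) (p : V)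
    (hp : p ∉ W) (C : Set (Sym2 V)) (hC : ∀ w ∈ W, s(p,w) ∈ C) :
    {w ∈ W | s(p,w) ∈ S}.ncard ≤ (S ∩ C).ncard := by
  apply Set.ncard_le_ncard_of_injOn (fun w => s(p,w))
  · rintro w ⟨hw, hwS⟩
    exact ⟨hwS, hC w hw⟩
  · rintro w ⟨hw, _⟩ w' ⟨hw', _⟩ h
    rw [Sym2.eq_iff] at h
    rcases h with ⟨_, h⟩ | ⟨h1, _⟩
    · exact h
    · exact absurd hw' (h1 ▸ hp)

private lemma budget_lemma {V : Type*} [Fintype V] (G : SimpleGraph V)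
    (S : Set (Sym2 V))
    (hmin : ∀ S', IsCograph (editGraph G S') → S.ncard ≤ S'.ncard)
    (hcog : IsCograph (editGraph G S))
    (X : Set V) (T : Set (Sym2 V)) (hTc : T ⊆ cutPairs X)
    (hTmod : IsModule (editGraph G T) X)
    (hbig : S.ncard + T.ncard < X.ncard) :
    (S ∩ cutPairs X).ncard ≤ T.ncard := by
  classical
  -- find x0 ∈ X untouched by cut-pairs of S ∪ T
  have hXne : X.Nonempty := by
    rw [← Set.ncard_pos]
    omega
  haveI : Nonempty V := ⟨hXne.choose⟩
  set D : Set V := {u ∈ X | ∃ v, v ∉ X ∧ s(u,v) ∈ S ∪ T} with hDdef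
  have hch : ∀ u ∈ D, ∃ v, v ∉ X ∧ s(u,v) ∈ S ∪ T := fun u hu => hu.2
  choose! f hf1 hf2 using hch
  have hDcard : D.ncard ≤ (S ∪ T).ncard := by
    apply Set.ncard_le_ncard_of_injOn (fun u => s(u, f u))
    · intro u hu; exact hf2 u hu
    · intro u hu u' hu' h
      rw [Sym2.eq_iff] at h
      rcases h with ⟨h, _⟩ | ⟨h1, h2⟩
      · exact h
      · exact absurd hu'.1 (h2 ▸ hf1 u hu)
  have hx0 : ∃ x0 ∈ X, x0 ∉ D := by
    by_contra h
    push_neg at h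
    have : X.ncard ≤ D.ncard := Set.ncard_le_ncard h (Set.toFinite D)
    have := Set.ncard_union_le S T
    omega
  obtain ⟨x0, hx0X, hx0D⟩ := hx0
  have hx0' : ∀ v, v ∉ X → s(x0,v) ∉ S ∪ T := by
    intro v hv hmem
    exact hx0D ⟨hx0X, v, hv, hmem⟩
  set S' : Set (Sym2 V) := (S \ cutPairs X) ∪ T with hS'def
  -- adjacency transfer facts
  have F1 : ∀ u v : V, s(u,v) ∉ cutPairs X →
      ((editGraph G S').Adj u v ↔ (editGraph G S).Adj u v) := by
    intro u v hcut
    apply editGraph_adj_congr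
    constructor
    · rintro (⟨h, _⟩ | h)
      · exact h
      · exact absurd (hTc h) hcut
    · intro h; exact Or.inl ⟨h, hcut⟩
  have F2 : ∀ u v : V, s(u,v) ∈ cutPairs X →
      ((editGraph G S').Adj u v ↔ (editGraph G T).Adj u v) := by
    intro u v hcut
    apply editGraph_adj_congr
    constructor
    · rintro (⟨_, h⟩ | h)
      · exact absurd hcut h
      · exact h
    · intro h; exact Or.inr h
  have hmod' : IsModule (editGraph G S') X := by
    intro u hu w hw v hv
    rw [F2 v u (mem_cutPairs'.2 (Or.inr ⟨hu, hv⟩)),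
        F2 v w (mem_cutPairs'.2 (Or.inr ⟨hw, hv⟩))]
    exact hTmod u hu w hw v hv
  have hprof : ∀ v, v ∉ X → ((editGraph G S').Adj v x0 ↔ (editGraph G S).Adj v x0) := by
    intro v hv
    have hmem := hx0' v hv
    rw [Sym2.eq_swap] at hmem
    rw [F2 v x0 (mem_cutPairs'.2 (Or.inr ⟨hx0X, hv⟩)),
        editGraph_adj_not_mem (fun h => hmem (Or.inr h)),
        editGraph_adj_not_mem (fun h => hmem (Or.inl h))]
  have hrep : ∀ v, v ∉ X → ∀ u ∈ X, ((editGraph G S').Adj v u ↔ (editGraph G S).Adj v x0) :=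
    fun v hv u hu => (hmod' u hu x0 hx0X v hv).trans (hprof v hv)
  have hrep' : ∀ u ∈ X, ∀ v, v ∉ X → ((editGraph G S').Adj u v ↔ (editGraph G S).Adj x0 v) := by
    intro u hu v hv
    constructor
    · intro h; exact ((hrep v hv u hu).mp h.symm).symm
    · intro h; exact ((hrep v hv u hu).mpr h.symm).symm
  have hsame : ∀ u v : V, (u ∈ X ↔ v ∈ X) →
      ((editGraph G S').Adj u v ↔ (editGraph G S).Adj u v) := by
    intro u v hiff
    apply F1
    intro hcut
    rcases mem_cutPairs'.1 hcut with ⟨h1, h2⟩ | ⟨h1, h2⟩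
    · exact h2 (hiff.1 h1)
    · exact h2 (hiff.2 h1)
  -- S' is a cograph edit
  have hcog' : IsCograph (editGraph G S') := by
    rintro a b c d ⟨hab, hac, had, hbc, hbd, hcd, Aab, Abc, Acd, Nac, Nad, Nbd⟩
    by_cases ha : a ∈ X <;> by_cases hb : b ∈ X <;> by_cases hc : c ∈ X <;> by_cases hd : d ∈ X
    -- TTTT
    · exact hcog a b c d ⟨hab, hac, had, hbc, hbd, hcd,
        (hsame a b (iff_of_true ha hb)).mp Aab, (hsame b c (iff_of_true hb hc)).mp Abc,
        (hsame c d (iff_of_true hc hd)).mp Acd,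
        fun h => Nac ((hsame a c (iff_of_true ha hc)).mpr h),
        fun h => Nad ((hsame a d (iff_of_true ha hd)).mpr h),
        fun h => Nbd ((hsame b d (iff_of_true hb hd)).mpr h)⟩
    -- TTTF : a,b,c ∈ X, d ∉ X : hmod b c d : Adj d b ↔ Adj d c; ¬bd, cd
    · exact Nbd (((hmod' b hb c hc d hd).mpr Acd.symm).symm)
    -- TTFT : c ∉ X : Adj c a ↔ Adj c b; ¬ac, bc
    · exact Nac (((hmod' a ha b hb c hc).mpr Abc.symm).symm)
    -- TTFF : a,b ∈ X, c,d ∉ : Adj c a ↔ Adj c b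
    · exact Nac (((hmod' a ha b hb c hc).mpr Abc.symm).symm)
    -- TFTT : b ∉ X : Adj b a ↔ Adj b d; ab, ¬bd
    · exact Nbd ((hmod' a ha d hd b hb).mp Aab.symm)
    -- TFTF : a,c ∈ X; b,d ∉ : Adj d a ↔ Adj d c; ¬ad, cd
    · exact Nad (((hmod' a ha c hc d hd).mpr Acd.symm).symm)
    -- TFFT : a,d ∈ X; b ∉ : Adj b a ↔ Adj b d
    · exact Nbd ((hmod' a ha d hd b hb).mp Aab.symm)
    -- TFFF : only a ∈ X : replace a by x0
    · refine hcog x0 b c d ⟨fun h => hb (h ▸ hx0X), fun h => hc (h ▸ hx0X),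
        fun h => hd (h ▸ hx0X), hbc, hbd, hcd,
        ((hrep b hb a ha).mp Aab.symm).symm,
        (hsame b c (iff_of_false hb hc)).mp Abc,
        (hsame c d (iff_of_false hc hd)).mp Acd,
        fun h => Nac ((hrep c hc a ha).mpr h.symm).symm,
        fun h => Nad ((hrep d hd a ha).mpr h.symm).symm,
        fun h => Nbd ((hsame b d (iff_of_false hb hd)).mpr h)⟩
    -- FTTT : a ∉ X : Adj a b ↔ Adj a c; ab, ¬ac
    · exact Nac ((hmod' b hb c hc a ha).mp Aab)
    -- FTTF : b,c ∈ X; a ∉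
    · exact Nac ((hmod' b hb c hc a ha).mp Aab)
    -- FTFT : b,d ∈ X; a ∉ : Adj a b ↔ Adj a d
    · exact Nad ((hmod' b hb d hd a ha).mp Aab)
    -- FTFF : only b ∈ X
    · refine hcog a x0 c d ⟨fun h => ha (h ▸ hx0X), hac, had,
        fun h => hc (h ▸ hx0X), fun h => hd (h ▸ hx0X), hcd,
        (hrep a ha b hb).mp Aab,
        ((hrep c hc b hb).mp Abc.symm).symm,
        (hsame c d (iff_of_false hc hd)).mp Acd,
        fun h => Nac ((hsame a c (iff_of_false ha hc)).mpr h),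
        fun h => Nad ((hsame a d (iff_of_false ha hd)).mpr h),
        fun h => Nbd ((hrep d hd b hb).mpr h.symm).symm⟩
    -- FFTT : c,d ∈ X; b ∉ : Adj b c ↔ Adj b d; bc, ¬bd
    · exact Nbd ((hmod' c hc d hd b hb).mp Abc)
    -- FFTF : only c ∈ X
    · refine hcog a b x0 d ⟨hab, fun h => ha (h ▸ hx0X), had,
        fun h => hb (h ▸ hx0X), hbd, fun h => hd (h.symm ▸ hx0X),
        (hsame a b (iff_of_false ha hb)).mp Aab,
        (hrep b hb c hc).mp Abc,
        ((hrep d hd c hc).mp Acd.symm).symm,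
        fun h => Nac ((hrep a ha c hc).mpr h),
        fun h => Nad ((hsame a d (iff_of_false ha hd)).mpr h),
        fun h => Nbd ((hsame b d (iff_of_false hb hd)).mpr h)⟩
    -- FFFT : only d ∈ X
    · refine hcog a b c x0 ⟨hab, hac, fun h => ha (h ▸ hx0X),
        hbc, fun h => hb (h ▸ hx0X), fun h => hc (h ▸ hx0X),
        (hsame a b (iff_of_false ha hb)).mp Aab,
        (hsame b c (iff_of_false hb hc)).mp Abc,
        (hrep c hc d hd).mp Acd,
        fun h => Nac ((hsame a c (iff_of_false ha hc)).mpr h),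
        fun h => Nad ((hrep a ha d hd).mpr h),
        fun h => Nbd ((hrep b hb d hd).mpr h)⟩
    -- FFFF
    · exact hcog a b c d ⟨hab, hac, had, hbc, hbd, hcd,
        (hsame a b (iff_of_false ha hb)).mp Aab, (hsame b c (iff_of_false hb hc)).mp Abc,
        (hsame c d (iff_of_false hc hd)).mp Acd,
        fun h => Nac ((hsame a c (iff_of_false ha hc)).mpr h),
        fun h => Nad ((hsame a d (iff_of_false ha hd)).mpr h),
        fun h => Nbd ((hsame b d (iff_of_false hb hd)).mpr h)⟩
  -- conclude by minimality
  have h1 : S.ncard ≤ S'.ncard := hmin S' hcog'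
  have h2 : S'.ncard ≤ (S \ cutPairs X).ncard + T.ncard := Set.ncard_union_le _ _
  have h3 : (S ∩ cutPairs X).ncard + (S \ cutPairs X).ncard = S.ncard :=
    Set.ncard_inter_add_ncard_diff_eq_ncard S (cutPairs X) (Set.toFinite S)
  omega

/-- if `G` has a nested `t`-module `(A, B, C, K, I)` with `t ≥ 1` and
admits a cograph edit of size at most `k`, then every minimum cograph edit `S` of `G`
(of size at most `k`) contains every edge of `G` between `A` and `I` and every
non-edge of `G` between `A` and `K`. -/
theorem nested_tmodule_rule_safe {V : Type*} [Fintype V] (G : SimpleGraph V)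
    (k t : ℕ) (ht : 1 ≤ t) (A B C K I : Set V)
    (hnest : IsNestedTModule G k t A B C K I)
    (hexists : ∃ S0 : Set (Sym2 V), IsCograph (editGraph G S0) ∧ S0.ncard ≤ k)
    (S : Set (Sym2 V)) (hcog : IsCograph (editGraph G S)) (hk : S.ncard ≤ k)
    (hmin : ∀ S', IsCograph (editGraph G S') → S.ncard ≤ S'.ncard) :
    (∀ x ∈ A, ∀ y ∈ I, G.Adj x y → s(x,y) ∈ S) ∧
    (∀ x ∈ A, ∀ y ∈ K, x ≠ y → ¬ G.Adj x y → s(x,y) ∈ S) := by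
  classical
  obtain ⟨hA, hB, hC, hK, hI, hcover, hdisj, hmodA, hmodAB, hmodABC, hcard,
    ⟨Bp, hBpB, hBpcard, hBp⟩, ⟨Bq, hBqB, hBqcard, hBq⟩,
    ⟨Cp, hCpC, hCpcard, hCp⟩, ⟨Cq, hCqC, hCqcard, hCq⟩⟩ := hnest
  simp only [List.pairwise_cons] at hdisj
  obtain ⟨h1, h2, h3, h4, -⟩ := hdisj
  have dAB : Disjoint A B := h1 B (by simp)
  have dAC : Disjoint A C := h1 C (by simp)
  have dAK : Disjoint A K := h1 K (by simp)
  have dAI : Disjoint A I := h1 I (by simp)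
  have dBC : Disjoint B C := h2 C (by simp)
  have dBK : Disjoint B K := h2 K (by simp)
  have dBI : Disjoint B I := h2 I (by simp)
  have dCK : Disjoint C K := h3 K (by simp)
  have dCI : Disjoint C I := h3 I (by simp)
  have ne_of : ∀ {s u : Set V} {a b : V}, Disjoint s u → a ∈ s → b ∈ u → a ≠ b :=
    fun d ha hb h => Set.disjoint_left.mp d ha (h ▸ hb)
  -- budget bounds on the three cuts
  have budget : ∀ X : Set V, IsTModule G t X → A ⊆ X → (S ∩ cutPairs X).ncard ≤ t := by
    intro X ⟨T, hTc, hTcard, hTmod⟩ hAX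
    have hAX' : A.ncard ≤ X.ncard := Set.ncard_le_ncard hAX (Set.toFinite X)
    have := budget_lemma G S hmin hcog X T hTc hTmod (by omega)
    omega
  have budA : (S ∩ cutPairs A).ncard ≤ t := budget A hmodA subset_rfl
  have budAB : (S ∩ cutPairs (A ∪ B)).ncard ≤ t := budget _ hmodAB Set.subset_union_left
  have budABC : (S ∩ cutPairs (A ∪ B ∪ C)).ncard ≤ t :=
    budget _ hmodABC (Set.subset_union_left.trans Set.subset_union_left)
  -- membership facts
  have hCnAB : ∀ c ∈ C, c ∉ A ∪ B := by
    rintro c hc (h | h)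
    · exact Set.disjoint_right.mp dAC hc h
    · exact Set.disjoint_right.mp dBC hc h
  have hInABC : ∀ i ∈ I, i ∉ A ∪ B ∪ C := by
    rintro i hi ((h | h) | h)
    · exact Set.disjoint_right.mp dAI hi h
    · exact Set.disjoint_right.mp dBI hi h
    · exact Set.disjoint_right.mp dCI hi h
  have hKnABC : ∀ w ∈ K, w ∉ A ∪ B ∪ C := by
    rintro w hw ((h | h) | h)
    · exact Set.disjoint_right.mp dAK hw h
    · exact Set.disjoint_right.mp dBK hw h
    · exact Set.disjoint_right.mp dCK hw h
  have hBnA : ∀ b ∈ B, b ∉ A := fun b hb h => Set.disjoint_right.mp dAB hb h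
  -- generic picker: avoid two bad pair-sets
  constructor
  · -- Part 1: x ∈ A, y ∈ I, edge
    intro x hx y hy hadj
    by_contra hxyS
    -- choose c ∈ Cp
    have hxCp : x ∉ Cp := fun h => Set.disjoint_left.mp dAC hx (hCpC h)
    have hyCp : y ∉ Cp := fun h => Set.disjoint_right.mp dCI hy (hCpC h)
    have hbad1 : {c ∈ Cp | s(x,c) ∈ S}.ncard ≤ t :=
      le_trans (ncard_filter_pair_le S Cp x hxCp (cutPairs (A ∪ B))
        (fun c hc => mem_cutPairs'.2 (Or.inl ⟨Or.inl hx, hCnAB c (hCpC hc)⟩))) budAB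
    have hbad2 : {c ∈ Cp | s(y,c) ∈ S}.ncard ≤ t :=
      le_trans (ncard_filter_pair_le S Cp y hyCp (cutPairs (A ∪ B ∪ C))
        (fun c hc => mem_cutPairs'.2 (Or.inr ⟨Or.inr (hCpC hc), hInABC y hy⟩))) budABC
    obtain ⟨c, hcCp, hcx, hcy⟩ : ∃ c ∈ Cp, s(x,c) ∉ S ∧ s(y,c) ∉ S := by
      by_contra hcon
      push_neg at hcon
      have hsub : Cp ⊆ {c ∈ Cp | s(x,c) ∈ S} ∪ {c ∈ Cp | s(y,c) ∈ S} := by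
        intro c hc
        by_cases h : s(x,c) ∈ S
        · exact Or.inl ⟨hc, h⟩
        · exact Or.inr ⟨hc, hcon c hc h⟩
      have e1 := Set.ncard_le_ncard hsub (Set.toFinite _)
      have e2 := Set.ncard_union_le {c ∈ Cp | s(x,c) ∈ S} {c ∈ Cp | s(y,c) ∈ S}
      omega
    have hcC : c ∈ C := hCpC hcCp
    -- choose b ∈ Bq
    have hxBq : x ∉ Bq := fun h => Set.disjoint_left.mp dAB hx (hBqB h)
    have hyBq : y ∉ Bq := fun h => Set.disjoint_right.mp dBI hy (hBqB h)
    have hcBq : c ∉ Bq := fun h => Set.disjoint_right.mp dBC hcC (hBqB h)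
    have hbad3 : {b ∈ Bq | s(x,b) ∈ S}.ncard ≤ t :=
      le_trans (ncard_filter_pair_le S Bq x hxBq (cutPairs A)
        (fun b hb => mem_cutPairs'.2 (Or.inl ⟨hx, hBnA b (hBqB hb)⟩))) budA
    have hbad4 : {b ∈ Bq | s(y,b) ∈ S}.ncard ≤ t :=
      le_trans (ncard_filter_pair_le S Bq y hyBq (cutPairs (A ∪ B ∪ C))
        (fun b hb => mem_cutPairs'.2 (Or.inr ⟨Or.inl (Or.inr (hBqB hb)), hInABC y hy⟩))) budABC
    have hbad5 : {b ∈ Bq | s(c,b) ∈ S}.ncard ≤ t :=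
      le_trans (ncard_filter_pair_le S Bq c hcBq (cutPairs (A ∪ B))
        (fun b hb => mem_cutPairs'.2 (Or.inr ⟨Or.inr (hBqB hb), hCnAB c hcC⟩))) budAB
    obtain ⟨b, hbBq, hbx, hby, hbc⟩ : ∃ b ∈ Bq, s(x,b) ∉ S ∧ s(y,b) ∉ S ∧ s(c,b) ∉ S := by
      by_contra hcon
      push_neg at hcon
      have hsub : Bq ⊆ {b ∈ Bq | s(x,b) ∈ S} ∪ {b ∈ Bq | s(y,b) ∈ S} ∪ {b ∈ Bq | s(c,b) ∈ S} := by
        intro b hb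
        by_cases h1' : s(x,b) ∈ S
        · exact Or.inl (Or.inl ⟨hb, h1'⟩)
        by_cases h2' : s(y,b) ∈ S
        · exact Or.inl (Or.inr ⟨hb, h2'⟩)
        · exact Or.inr ⟨hb, hcon b hb h1' h2'⟩
      have e1 := Set.ncard_le_ncard hsub (Set.toFinite _)
      have e2 := Set.ncard_union_le ({b ∈ Bq | s(x,b) ∈ S} ∪ {b ∈ Bq | s(y,b) ∈ S}) {b ∈ Bq | s(c,b) ∈ S}
      have e3 := Set.ncard_union_le {b ∈ Bq | s(x,b) ∈ S} {b ∈ Bq | s(y,b) ∈ S}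
      omega
    have hbB : b ∈ B := hBqB hbBq
    -- build the P4  y - x - c - b in editGraph G S
    have hyx : s(y,x) ∉ S := by rw [Sym2.eq_swap]; exact hxyS
    refine hcog y x c b ⟨ne_of dAI hx hy |>.symm, ne_of dCI hcC hy |>.symm,
      ne_of dBI hbB hy |>.symm, ne_of dAC hx hcC, ne_of dAB hx hbB,
      (ne_of dBC hbB hcC).symm, ?_, ?_, ?_, ?_, ?_, ?_⟩
    · exact (editGraph_adj_not_mem hyx).mpr hadj.symm
    · exact (editGraph_adj_not_mem hcx).mpr ((hCp c hcCp).1 x (Or.inl hx)).symm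
    · exact (editGraph_adj_not_mem hbc).mpr ((hCp c hcCp).1 b (Or.inr hbB)).symm.symm
    · exact fun h => (hCp c hcCp).2.2 y hy ((editGraph_adj_not_mem hcy).mp h).symm
    · exact fun h => (hBq b hbBq).2.2 y hy ((editGraph_adj_not_mem hby).mp h).symm
    · exact fun h => (hBq b hbBq).1 x hx ((editGraph_adj_not_mem hbx).mp h).symm
  · -- Part 2: x ∈ A, y ∈ K, non-edge
    intro x hx y hy hxy hnadj
    by_contra hxyS
    -- choose b ∈ Bp
    have hxBp : x ∉ Bp := fun h => Set.disjoint_left.mp dAB hx (hBpB h)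
    have hyBp : y ∉ Bp := fun h => Set.disjoint_right.mp dBK hy (hBpB h)
    have hbad1 : {b ∈ Bp | s(x,b) ∈ S}.ncard ≤ t :=
      le_trans (ncard_filter_pair_le S Bp x hxBp (cutPairs A)
        (fun b hb => mem_cutPairs'.2 (Or.inl ⟨hx, hBnA b (hBpB hb)⟩))) budA
    have hbad2 : {b ∈ Bp | s(y,b) ∈ S}.ncard ≤ t :=
      le_trans (ncard_filter_pair_le S Bp y hyBp (cutPairs (A ∪ B ∪ C))
        (fun b hb => mem_cutPairs'.2 (Or.inr ⟨Or.inl (Or.inr (hBpB hb)), hKnABC y hy⟩))) budABC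
    obtain ⟨b, hbBp, hbx, hby⟩ : ∃ b ∈ Bp, s(x,b) ∉ S ∧ s(y,b) ∉ S := by
      by_contra hcon
      push_neg at hcon
      have hsub : Bp ⊆ {b ∈ Bp | s(x,b) ∈ S} ∪ {b ∈ Bp | s(y,b) ∈ S} := by
        intro b hb
        by_cases h : s(x,b) ∈ S
        · exact Or.inl ⟨hb, h⟩
        · exact Or.inr ⟨hb, hcon b hb h⟩
      have e1 := Set.ncard_le_ncard hsub (Set.toFinite _)
      have e2 := Set.ncard_union_le {b ∈ Bp | s(x,b) ∈ S} {b ∈ Bp | s(y,b) ∈ S}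
      omega
    have hbB : b ∈ B := hBpB hbBp
    -- choose c ∈ Cq
    have hxCq : x ∉ Cq := fun h => Set.disjoint_left.mp dAC hx (hCqC h)
    have hyCq : y ∉ Cq := fun h => Set.disjoint_right.mp dCK hy (hCqC h)
    have hbCq : b ∉ Cq := fun h => Set.disjoint_left.mp dBC hbB (hCqC h)
    have hbad3 : {c ∈ Cq | s(x,c) ∈ S}.ncard ≤ t :=
      le_trans (ncard_filter_pair_le S Cq x hxCq (cutPairs (A ∪ B))
        (fun c hc => mem_cutPairs'.2 (Or.inl ⟨Or.inl hx, hCnAB c (hCqC hc)⟩))) budAB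
    have hbad4 : {c ∈ Cq | s(y,c) ∈ S}.ncard ≤ t :=
      le_trans (ncard_filter_pair_le S Cq y hyCq (cutPairs (A ∪ B ∪ C))
        (fun c hc => mem_cutPairs'.2 (Or.inr ⟨Or.inr (hCqC hc), hKnABC y hy⟩))) budABC
    have hbad5 : {c ∈ Cq | s(b,c) ∈ S}.ncard ≤ t :=
      le_trans (ncard_filter_pair_le S Cq b hbCq (cutPairs (A ∪ B))
        (fun c hc => mem_cutPairs'.2 (Or.inl ⟨Or.inr hbB, hCnAB c (hCqC hc)⟩))) budAB
    obtain ⟨c, hcCq, hcx, hcy, hcb⟩ : ∃ c ∈ Cq, s(x,c) ∉ S ∧ s(y,c) ∉ S ∧ s(b,c) ∉ S := by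
      by_contra hcon
      push_neg at hcon
      have hsub : Cq ⊆ {c ∈ Cq | s(x,c) ∈ S} ∪ {c ∈ Cq | s(y,c) ∈ S} ∪ {c ∈ Cq | s(b,c) ∈ S} := by
        intro c hc
        by_cases h1' : s(x,c) ∈ S
        · exact Or.inl (Or.inl ⟨hc, h1'⟩)
        by_cases h2' : s(y,c) ∈ S
        · exact Or.inl (Or.inr ⟨hc, h2'⟩)
        · exact Or.inr ⟨hc, hcon c hc h1' h2'⟩
      have e1 := Set.ncard_le_ncard hsub (Set.toFinite _)
      have e2 := Set.ncard_union_le ({c ∈ Cq | s(x,c) ∈ S} ∪ {c ∈ Cq | s(y,c) ∈ S}) {c ∈ Cq | s(b,c) ∈ S}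
      have e3 := Set.ncard_union_le {c ∈ Cq | s(x,c) ∈ S} {c ∈ Cq | s(y,c) ∈ S}
      omega
    have hcC : c ∈ C := hCqC hcCq
    -- build the P4  x - b - y - c in editGraph G S
    have hby' : s(b,y) ∉ S := by rw [Sym2.eq_swap]; exact hby
    have hyc : s(y,c) ∉ S := hcy
    refine hcog x b y c ⟨ne_of dAB hx hbB, hxy, ne_of dAC hx hcC,
      ne_of dBK hbB hy, (ne_of dBC hbB hcC), ne_of dCK hcC hy |>.symm,
      ?_, ?_, ?_, ?_, ?_, ?_⟩
    · exact (editGraph_adj_not_mem hbx).mpr ((hBp b hbBp).1 x hx).symm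
    · exact (editGraph_adj_not_mem hby').mpr ((hBp b hbBp).2.1 y hy)
    · exact (editGraph_adj_not_mem hyc).mpr ((hCq c hcCq).2.1 y hy).symm
    · exact fun h => hnadj ((editGraph_adj_not_mem hxyS).mp h)
    · exact fun h => (hCq c hcCq).1 x (Or.inl hx) ((editGraph_adj_not_mem hcx).mp h).symm
    · exact fun h => (hCq c hcCq).1 b (Or.inr hbB) ((editGraph_adj_not_mem hcb).mp h).symm
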